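/- Let X be a topological vector space, A ⊆ X convex, x* ∈ A a local maximizer of: maximize f₀ over x ∈ A subject to fᵢ(x) ≥ 0, i = 1,…,n. Suppose each ψᵢ : X → ℝ ∪ {−∞} satisfies ψᵢ(0) = 0, 0 ∈ int dom ψᵢ, and is a weak lower concave approximation of fᵢ at x* (for each Δx there exist α₀ > 0 and β(α) → 0 with fᵢ(x* + αΔx) − fᵢ(x*) ≥ ψᵢ(αΔx) − αβ(α)). If g(·) = min{ψ₀(·), ψ₁(·) + f₁(x*), …, ψₙ(·) + fₙ(x*)} is superhomogeneous, then 0 is a global maximizer of g on A − x*. -/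

import Mathlib

open Filter Topology

theorem stmt10 {X : Type*} [AddCommGroup X] [Module ℝ X] [TopologicalSpace X]
    [IsTopologicalAddGroup X] [ContinuousSMul ℝ X]
    (n : ℕ) (A : Set X) (hA : Convex ℝ A)
    (f : Fin (n + 1) → X → ℝ) (ψ : Fin (n + 1) → X → EReal) (xs : X)
    (hxs : xs ∈ A)
    (hfeas : ∀ i : Fin (n + 1), i ≠ 0 → 0 ≤ f i xs)
    (hlocmax : ∃ U ∈ 𝓝 xs, ∀ x ∈ U ∩ A, (∀ i : Fin (n + 1), i ≠ 0 → 0 ≤ f i x) →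
      f 0 x ≤ f 0 xs)
    (hψ0 : ∀ i, ψ i 0 = 0)
    (hψdom : ∀ i, (0 : X) ∈ interior {y | ψ i y ≠ ⊥})
    (hψconc : ∀ i, ∀ x y : X, ∀ a b : ℝ, 0 ≤ a → 0 ≤ b → a + b = 1 →
      (a : EReal) * ψ i x + (b : EReal) * ψ i y ≤ ψ i (a • x + b • y))
    (hψlca : ∀ i, ∀ Δx : X, ∃ α₀ > (0 : ℝ), ∃ β : ℝ → ℝ,
      Tendsto β (𝓝[>] (0 : ℝ)) (𝓝 0) ∧
      ∀ α : ℝ, 0 ≤ α → α < α₀ →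
        ψ i (α • Δx) - ((α * β α : ℝ) : EReal) ≤ ((f i (xs + α • Δx) - f i xs : ℝ) : EReal))
    (g : X → EReal)
    (hgdef : ∀ y : X, g y = ⨅ i : Fin (n + 1),
      (ψ i y + if i = 0 then 0 else ((f i xs : ℝ) : EReal)))
    (hsuper : ∀ y : X, ∀ a : ℝ, 0 < a → a < 1 → (a : EReal) * g y ≤ g (a • y)) :
    ∀ z ∈ A, g (z - xs) ≤ g 0 := by
  intro z hz
  by_contra hcon
  push_neg at hcon
  set Δx := z - xs with hΔx
  -- g 0 ≥ 0
  have hg0 : (0 : EReal) ≤ g 0 := by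
    rw [hgdef]
    refine le_iInf fun i => ?_
    rw [hψ0, zero_add]
    split_ifs with h
    · exact le_refl _
    · exact_mod_cast hfeas i h
  have hgpos : (0 : EReal) < g Δx := lt_of_le_of_lt hg0 hcon
  -- pick a real 0 < c ≤ g Δx
  obtain ⟨cE, hc0E, hcgE⟩ := exists_between hgpos
  lift cE to ℝ using ⟨(hcgE.trans_le le_top).ne, ((EReal.bot_lt_zero).trans hc0E).ne'⟩ with c hc
  have hc0 : (0 : ℝ) < c := by exact_mod_cast hc0E
  have hcg : (c : EReal) ≤ g Δx := hcgE.le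
  -- approximation data
  choose α₀ hα₀pos β hβtend hβ using fun i => hψlca i Δx
  obtain ⟨U, hU, hUmax⟩ := hlocmax
  -- eventually properties of α
  have h1 : ∀ᶠ α : ℝ in 𝓝[>] 0, 0 < α := self_mem_nhdsWithin
  have h2 : ∀ᶠ α : ℝ in 𝓝[>] 0, α < 1 :=
    ((eventually_lt_nhds (by norm_num : (0:ℝ) < 1))).filter_mono nhdsWithin_le_nhds
  have h3 : ∀ᶠ α : ℝ in 𝓝[>] 0, ∀ i, α < α₀ i :=
    eventually_all.2 fun i =>
      (eventually_lt_nhds (hα₀pos i)).filter_mono nhdsWithin_le_nhds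
  have h4 : ∀ᶠ α : ℝ in 𝓝[>] 0, ∀ i, β i α < c :=
    eventually_all.2 fun i => (hβtend i).eventually_lt_const hc0
  have h5 : ∀ᶠ α : ℝ in 𝓝[>] 0, xs + α • Δx ∈ U := by
    have hcont : Tendsto (fun α : ℝ => xs + α • Δx) (𝓝 0) (𝓝 xs) := by
      have : Continuous (fun α : ℝ => xs + α • Δx) := by continuity
      have h := this.tendsto 0
      simpa using h
    exact (hcont.mono_left nhdsWithin_le_nhds).eventually hU
  obtain ⟨α, ⟨⟨hα0, hα1⟩, hαα₀⟩, hαβ, hαU⟩ :=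
    (((h1.and h2).and h3).and (h4.and h5)).exists
  set x := xs + α • Δx with hx
  -- x ∈ A
  have hxA : x ∈ A := by
    have h := hA hxs hz (by linarith : (0:ℝ) ≤ 1 - α) hα0.le (by ring)
    have he : (1 - α) • xs + α • z = xs + α • Δx := by
      show (1 - α) • xs + α • z = xs + α • (z - xs)
      module
    rw [hx, ← he]; exact h
  -- key estimate
  have key : ∀ i : Fin (n + 1),
      α * c ≤ f i x - f i xs + α * β i α + (if i = 0 then 0 else f i xs) := by
    intro i
    have hginf : g (α • Δx) ≤ ψ i (α • Δx) + (if i = 0 then 0 else ((f i xs : ℝ) : EReal)) := by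
      rw [hgdef]; exact iInf_le _ i
    have hsup : (α : EReal) * g Δx ≤ g (α • Δx) := hsuper Δx α hα0 hα1
    have hαc : ((α * c : ℝ) : EReal) ≤ (α : EReal) * g Δx := by
      rw [EReal.coe_mul]
      exact mul_le_mul_of_nonneg_left hcg (by exact_mod_cast hα0.le)
    have hψle : ψ i (α • Δx) ≤ ((f i x - f i xs + α * β i α : ℝ) : EReal) := by
      have h := hβ i α hα0.le (hαα₀ i)
      have h2 := (EReal.sub_le_iff_le_add (Or.inl (EReal.coe_ne_bot _))
        (Or.inl (EReal.coe_ne_top _))).1 h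
      calc ψ i (α • Δx) ≤ ((f i x - f i xs : ℝ) : EReal) + ((α * β i α : ℝ) : EReal) := h2
        _ = _ := by norm_cast
    have htot : ((α * c : ℝ) : EReal) ≤
        ((f i x - f i xs + α * β i α : ℝ) : EReal) + (if i = 0 then 0 else ((f i xs : ℝ) : EReal)) :=
      (hαc.trans hsup).trans (hginf.trans (add_le_add_left hψle _))
    have : (if i = 0 then 0 else ((f i xs : ℝ) : EReal)) =
        (((if i = 0 then 0 else f i xs : ℝ)) : EReal) := by
      split_ifs <;> simp
    rw [this, ← EReal.coe_add, EReal.coe_le_coe_iff] at htot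
    exact htot
  -- feasibility of x
  have hfeasx : ∀ i : Fin (n + 1), i ≠ 0 → 0 ≤ f i x := by
    intro i hi
    have h := key i
    rw [if_neg hi] at h
    nlinarith [hαβ i]
  -- contradiction with local maximality
  have h0 := key 0
  rw [if_pos rfl] at h0
  have hlt : f 0 xs < f 0 x := by nlinarith [hαβ 0]
  exact absurd (hUmax x ⟨hαU, hxA⟩ hfeasx) (not_le.2 hlt)
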